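/- With the notation of the previous setting (X double splitting with generalized inverse X⁺, P, Q, p, q the associated projections), the subspace E_X = { Q T q : T ∈ B(E,F) } is a topological complement of M(X) = { T : T(N(X)) ⊆ R(X) } in B(E,F), i.e., B(E,F) = M(X) ⊕ E_X. -/

import Mathlib

open ContinuousLinearMap

variable {E F : Type*} [NormedAddCommGroup E] [NormedSpace ℝ E] [CompleteSpace E]
  [NormedAddCommGroup F] [NormedSpace ℝ F] [CompleteSpace F]

theorem stmt15 (X : E →L[ℝ] F) (hX : X ≠ 0) (Xp : F →L[ℝ] E)
    (h1 : X ∘L (Xp ∘L X) = X) (h2 : Xp ∘L (X ∘L Xp) = Xp)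
    (Q : F →L[ℝ] F) (q : E →L[ℝ] E)
    (hQ : Q ∘L Q = Q) (hQr : LinearMap.range (Q : F →ₗ[ℝ] F) = LinearMap.ker (Xp : F →ₗ[ℝ] E))
    (hQk : LinearMap.ker (Q : F →ₗ[ℝ] F) = LinearMap.range (X : E →ₗ[ℝ] F))
    (hq : q ∘L q = q) (hqr : LinearMap.range (q : E →ₗ[ℝ] E) = LinearMap.ker (X : E →ₗ[ℝ] F))
    (hqk : LinearMap.ker (q : E →ₗ[ℝ] E) = LinearMap.range (Xp : F →ₗ[ℝ] E)) :
    IsClosed {S : E →L[ℝ] F | Submodule.map (S : E →ₗ[ℝ] F) (LinearMap.ker (X : E →ₗ[ℝ] F)) ≤ LinearMap.range (X : E →ₗ[ℝ] F)} ∧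
    IsClosed {S : E →L[ℝ] F | ∃ T : E →L[ℝ] F, S = Q ∘L (T ∘L q)} ∧
    ∀ S : E →L[ℝ] F, ∃! TU : (E →L[ℝ] F) × (E →L[ℝ] F),
      S = TU.1 + TU.2 ∧
      Submodule.map (TU.1 : E →ₗ[ℝ] F) (LinearMap.ker (X : E →ₗ[ℝ] F)) ≤ LinearMap.range (X : E →ₗ[ℝ] F) ∧
      (∃ T : E →L[ℝ] F, TU.2 = Q ∘L (T ∘L q)) := by
  -- Φ S = Q ∘ S ∘ q as a continuous linear map on B(E,F)
  set Φ : (E →L[ℝ] F) →L[ℝ] (E →L[ℝ] F) :=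
    (ContinuousLinearMap.compL ℝ E F F Q).comp
      ((ContinuousLinearMap.compL ℝ E E F).flip q) with hΦdef
  have hΦ : ∀ S : E →L[ℝ] F, Φ S = Q ∘L (S ∘L q) := fun S => rfl
  have hQQ : ∀ y : F, Q (Q y) = Q y := by
    intro y; have := ContinuousLinearMap.ext_iff.mp hQ y; simpa using this
  have hqq : ∀ x : E, q (q x) = q x := by
    intro x; have := ContinuousLinearMap.ext_iff.mp hq x; simpa using this
  have hqfix : ∀ x ∈ LinearMap.ker (X : E →ₗ[ℝ] F), q x = x := by
    intro x hx
    have : x ∈ LinearMap.range (q : E →ₗ[ℝ] E) := hqr ▸ hx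
    obtain ⟨y, rfl⟩ := this
    exact hqq y
  -- M(X) = ker Φ
  have hM_iff : ∀ S : E →L[ℝ] F,
      Submodule.map (S : E →ₗ[ℝ] F) (LinearMap.ker (X : E →ₗ[ℝ] F)) ≤ LinearMap.range (X : E →ₗ[ℝ] F) ↔ Φ S = 0 := by
    intro S
    constructor
    · intro hS
      ext x
      have hqx : q x ∈ LinearMap.ker (X : E →ₗ[ℝ] F) := hqr ▸ LinearMap.mem_range_self q.toLinearMap x
      have : S (q x) ∈ LinearMap.range (X : E →ₗ[ℝ] F) := hS ⟨q x, hqx, rfl⟩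
      have : S (q x) ∈ LinearMap.ker (Q : F →ₗ[ℝ] F) := hQk ▸ this
      simpa [hΦ] using this
    · intro hS y hy
      obtain ⟨x, hx, rfl⟩ := hy
      have h0 : Q (S (q x)) = 0 := by
        have := ContinuousLinearMap.ext_iff.mp hS x
        simpa [hΦ] using this
      rw [hqfix x hx] at h0
      rw [← hQk]
      exact h0
  -- E_X = fixed points of Φ
  have hE_iff : ∀ S : E →L[ℝ] F,
      (∃ T : E →L[ℝ] F, S = Q ∘L (T ∘L q)) ↔ Φ S = S := by
    intro S
    constructor
    · rintro ⟨T, rfl⟩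
      ext x
      simp [hΦ, hQQ, hqq]
    · intro h
      exact ⟨S, h.symm⟩
  have hΦidem : ∀ S : E →L[ℝ] F, Φ (Φ S) = Φ S := by
    intro S
    ext x
    simp [hΦ, hQQ, hqq]
  refine ⟨?_, ?_, ?_⟩
  · have : {S : E →L[ℝ] F | Submodule.map (S : E →ₗ[ℝ] F) (LinearMap.ker (X : E →ₗ[ℝ] F)) ≤ LinearMap.range (X : E →ₗ[ℝ] F)}
        = Φ ⁻¹' {0} := by
      ext S; simp [hM_iff S]
    rw [this]
    exact isClosed_singleton.preimage Φ.continuous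
  · have : {S : E →L[ℝ] F | ∃ T : E →L[ℝ] F, S = Q ∘L (T ∘L q)}
        = (fun S => Φ S - S) ⁻¹' {0} := by
      ext S
      simp only [Set.mem_setOf_eq, Set.mem_preimage, Set.mem_singleton_iff, sub_eq_zero]
      exact hE_iff S
    rw [this]
    exact isClosed_singleton.preimage (Φ.continuous.sub continuous_id)
  · intro S
    refine ⟨(S - Φ S, Φ S), ⟨by simp, ?_, ⟨S, rfl⟩⟩, ?_⟩
    · rw [hM_iff]
      simp [map_sub, hΦidem S]
    · rintro ⟨T, U⟩ ⟨hSum, hT, hU⟩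
      rw [hM_iff] at hT
      rw [hE_iff] at hU
      have hU' : U = Φ S := by
        have := congrArg Φ hSum
        rw [map_add, hT, hU, zero_add] at this
        exact this.symm
      have hT' : T = S - Φ S := by
        rw [← hU']; rw [hSum]; abel
      simp [hT', hU']
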